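/- Every proper closed subgroup H of the torus T^d = (S¹)^d is contained in a subgroup of the form of the kernel of a map T^d → S¹ of the form g ↦ χ(g)^m, where χ : T^d → S¹ is a surjective continuous homomorphism and m ≥ 1. Equivalently, there is a surjective continuous homomorphism χ : T^d → S¹ such that χ(H) is a finite subgroup of S¹. -/

import Mathlib

open MeasureTheory Topology Set ComplexConjugate

noncomputable section Stmt2Aux

namespace Stmt2Aux

instance fact01 : Fact ((0:ℝ) < 1) := ⟨one_pos⟩

variable {d : ℕ}

/-- The torus. -/
abbrev Gd (d : ℕ) := Fin d → AddCircle (1 : ℝ)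

/-- The character of the torus associated to an integer vector. -/
def chi (n : Fin d → ℤ) : ContinuousAddMonoidHom (Gd d) (AddCircle (1:ℝ)) where
  toFun x := ∑ i, n i • x i
  map_zero' := by simp
  map_add' x y := by simp [smul_add, Finset.sum_add_distrib]
  continuous_toFun := by
    show Continuous fun x : Gd d => ∑ i, n i • x i
    exact continuous_finset_sum _ fun i _ => (continuous_zsmul (n i)).comp (continuous_apply i)

lemma chi_apply (n : Fin d → ℤ) (x : Gd d) : chi n x = ∑ i, n i • x i := by rfl

lemma chi_add (n m : Fin d → ℤ) (x : Gd d) : chi (n + m) x = chi n x + chi m x := by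
  simp [chi_apply, add_zsmul, Finset.sum_add_distrib]

lemma chi_neg (n : Fin d → ℤ) (x : Gd d) : chi (-n) x = -chi n x := by
  simp [chi_apply, neg_zsmul]

lemma chi_zero (x : Gd d) : chi (0 : Fin d → ℤ) x = 0 := by simp [chi_apply]

lemma chi_single (i : Fin d) (x : Gd d) : chi (Pi.single i 1) x = x i := by
  rw [chi_apply]
  rw [Finset.sum_eq_single i]
  · simp
  · intro j _ hj; simp [Pi.single_apply, hj]
  · simp

lemma chi_surjective {n : Fin d → ℤ} (hn : n ≠ 0) : Function.Surjective (chi n) := by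
  obtain ⟨j, hj⟩ : ∃ j, n j ≠ 0 := by
    by_contra h; push_neg at h; exact hn (funext h)
  intro y
  induction y using QuotientAddGroup.induction_on with
  | H r =>
    refine ⟨Pi.single j (↑(r / (n j : ℝ)) : AddCircle (1:ℝ)), ?_⟩
    have h1 : chi n (Pi.single j (↑(r / (n j : ℝ)) : AddCircle (1:ℝ)))
        = n j • ((↑(r / (n j : ℝ))) : AddCircle (1:ℝ)) := by
      rw [chi_apply, Finset.sum_eq_single j]
      · simp
      · intro i _ hi; simp [Pi.single_apply, hi]
      · simp
    rw [h1]
    have : (n j : ℤ) • ((↑(r / (n j : ℝ))) : AddCircle (1:ℝ))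
        = ((n j • (r / (n j : ℝ)) : ℝ) : AddCircle (1:ℝ)) := by
      rfl
    rw [this]
    congr 1
    rw [zsmul_eq_mul]
    field_simp

/-- The associated complex-valued character. -/
def fchar (n : Fin d → ℤ) : C(Gd d, ℂ) :=
  ⟨fun x => (AddCircle.toCircle (chi n x) : ℂ),
    continuous_subtype_val.comp (AddCircle.continuous_toCircle.comp (chi n).continuous)⟩

lemma fchar_apply (n : Fin d → ℤ) (x : Gd d) :
    fchar n x = (AddCircle.toCircle (chi n x) : ℂ) := rfl

lemma e_injective :
    Function.Injective (fun t : AddCircle (1:ℝ) => (AddCircle.toCircle t : ℂ)) := by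
  intro a b h
  exact AddCircle.injective_toCircle one_ne_zero (Circle.coe_injective h)

lemma fchar_zero : fchar (0 : Fin d → ℤ) = 1 := by
  ext x
  simp [fchar_apply, chi_zero]

lemma fchar_mul (n m : Fin d → ℤ) : fchar n * fchar m = fchar (n + m) := by
  ext x
  simp [fchar_apply, chi_add, AddCircle.toCircle_add]

lemma toCircle_neg (t : AddCircle (1:ℝ)) :
    AddCircle.toCircle (-t) = (AddCircle.toCircle t)⁻¹ := by
  refine eq_inv_of_mul_eq_one_left ?_
  rw [← AddCircle.toCircle_add, neg_add_cancel, AddCircle.toCircle_zero]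

lemma fchar_star (n : Fin d → ℤ) : star (fchar n) = fchar (-n) := by
  ext x
  simp only [ContinuousMap.star_apply, fchar_apply, chi_neg, toCircle_neg]
  rw [Circle.coe_inv_eq_conj]
  rfl

/-- Orthogonality: a nontrivial multiplicative character integrates to zero against any
left-invariant measure. -/
lemma integral_char {X : Type*} [AddGroup X] [TopologicalSpace X]
    [MeasurableSpace X] [MeasurableAdd X]
    (μ : Measure X) [μ.IsAddLeftInvariant]
    (φ : X → ℂ) (hadd : ∀ a b, φ (a + b) = φ a * φ b)
    (a : X) (ha : φ a ≠ 1) : ∫ x, φ x ∂μ = 0 := by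
  have h1 : ∫ x, φ (a + x) ∂μ = ∫ x, φ x ∂μ := integral_add_left_eq_self φ a
  have h2 : ∫ x, φ (a + x) ∂μ = φ a * ∫ x, φ x ∂μ := by
    simp_rw [hadd]
    exact integral_const_mul _ _
  have h3 : (φ a - 1) * ∫ x, φ x ∂μ = 0 := by
    rw [sub_mul, one_mul, ← h2, h1, sub_self]
  rcases mul_eq_zero.mp h3 with h | h
  · exact absurd (sub_eq_zero.mp h) ha
  · exact h

end Stmt2Aux

end Stmt2Aux

open Stmt2Aux

set_option maxHeartbeats 1000000 in
/-- Every proper closed subgroup `H` of the torus `T^d = (ℝ/ℤ)^d` admits a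
surjective continuous homomorphism `χ : T^d → S¹ = ℝ/ℤ` such that `χ(H)` is finite
(equivalently, `H` is contained in the kernel of `g ↦ χ(g)^m` for some `m ≥ 1`). -/
theorem stmt_2 (d : ℕ) (H : AddSubgroup (Fin d → AddCircle (1 : ℝ)))
    (hclosed : IsClosed (H : Set (Fin d → AddCircle (1 : ℝ))))
    (hproper : H ≠ ⊤) :
    ∃ χ : ContinuousAddMonoidHom (Fin d → AddCircle (1 : ℝ)) (AddCircle (1 : ℝ)),
      Function.Surjective χ ∧ (χ '' (H : Set (Fin d → AddCircle (1 : ℝ)))).Finite ∧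
      ∃ m : ℕ, 1 ≤ m ∧ ∀ h ∈ H, m • χ h = 0 := by
  classical
  by_cases hex : ∃ n : Fin d → ℤ, n ≠ 0 ∧ ∀ h ∈ H, chi n h = 0
  · obtain ⟨n, hn0, hker⟩ := hex
    refine ⟨chi n, chi_surjective hn0, ?_, 1, le_rfl, ?_⟩
    · refine Set.Finite.subset (Set.finite_singleton (0 : AddCircle (1:ℝ))) ?_
      rintro _ ⟨h, hh, rfl⟩
      exact hker h hh
    · intro h hh
      rw [hker h hh, smul_zero]
  · exfalso
    push_neg at hex
    -- Haar probability measure on the torus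
    let μ : Measure (Gd d) := Measure.addHaarMeasure ⊤
    haveI hμprob : IsProbabilityMeasure μ :=
      ⟨by rw [← TopologicalSpace.PositiveCompacts.coe_top (α := Gd d)]
          exact Measure.addHaarMeasure_self⟩
    -- the subgroup as a compact group
    haveI hHc : CompactSpace ↥H := isCompact_iff_compactSpace.mp hclosed.isCompact
    haveI : Nonempty ↥H := ⟨⟨0, H.zero_mem⟩⟩
    haveI : BorelSpace ↥H := Subtype.borelSpace (H : Set (Gd d))
    let ν : Measure ↥H := Measure.addHaarMeasure ⊤
    haveI hνprob : IsProbabilityMeasure ν :=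
      ⟨by rw [← TopologicalSpace.PositiveCompacts.coe_top (α := ↥H)]
          exact Measure.addHaarMeasure_self⟩
    -- integrability of continuous functions
    have intG : ∀ f : C(Gd d, ℂ), Integrable (⇑f) μ := fun f =>
      f.continuous.integrable_of_hasCompactSupport (HasCompactSupport.of_compactSpace _)
    have intH : ∀ f : C(Gd d, ℂ), Integrable (fun h : ↥H => f ↑h) ν := fun f =>
      (f.continuous.comp continuous_subtype_val).integrable_of_hasCompactSupport
        (HasCompactSupport.of_compactSpace _)
    -- the two integration functionals are 1-Lipschitz
    have lipG : LipschitzWith 1 (fun f : C(Gd d, ℂ) => ∫ x, f x ∂μ) := by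
      refine LipschitzWith.of_dist_le_mul fun f g => ?_
      rw [NNReal.coe_one, one_mul, dist_eq_norm, ← integral_sub (intG f) (intG g)]
      calc ‖∫ x, (f x - g x) ∂μ‖ ≤ dist f g * (μ Set.univ).toReal :=
            norm_integral_le_of_norm_le_const (Filter.Eventually.of_forall fun x => by
              rw [← dist_eq_norm]; exact f.dist_apply_le_dist x)
        _ = dist f g := by simp
    have lipH : LipschitzWith 1 (fun f : C(Gd d, ℂ) => ∫ h : ↥H, f ↑h ∂ν) := by
      refine LipschitzWith.of_dist_le_mul fun f g => ?_
      rw [NNReal.coe_one, one_mul, dist_eq_norm, ← integral_sub (intH f) (intH g)]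
      calc ‖∫ h : ↥H, (f ↑h - g ↑h) ∂ν‖ ≤ dist f g * (ν Set.univ).toReal :=
            norm_integral_le_of_norm_le_const (Filter.Eventually.of_forall fun h => by
              rw [← dist_eq_norm]; exact f.dist_apply_le_dist (↑h))
        _ = dist f g := by simp
    -- the set of functions where the two integrals agree
    set S : Set C(Gd d, ℂ) := {f | ∫ h : ↥H, f ↑h ∂ν = ∫ x, f x ∂μ} with hSdef
    have hSclosed : IsClosed S := isClosed_eq lipH.continuous lipG.continuous
    -- each character lies in S
    have hcharS : ∀ n : Fin d → ℤ, fchar n ∈ S := by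
      intro n
      by_cases hn : n = 0
      · subst hn
        rw [hSdef]
        simp only [Set.mem_setOf_eq, fchar_zero, ContinuousMap.one_apply]
        simp
      · have hGzero : ∫ x, fchar n x ∂μ = 0 := by
          obtain ⟨x, hx⟩ := chi_surjective hn (((1/2 : ℝ) : AddCircle (1:ℝ)))
          refine integral_char μ _ (fun a b => by
            simp [fchar_apply, map_add, AddCircle.toCircle_add]) x ?_
          rw [fchar_apply, hx]
          intro hcontra
          have h12 : (((1/2 : ℝ)) : AddCircle (1:ℝ)) = 0 := by
            apply e_injective
            simpa [AddCircle.toCircle_zero] using hcontra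
          rw [AddCircle.coe_eq_zero_iff] at h12
          obtain ⟨k, hk⟩ := h12
          rw [zsmul_eq_mul, mul_one] at hk
          have : (2 * k : ℤ) = 1 := by
            have : (2 * k : ℝ) = 1 := by linarith
            exact_mod_cast this
          omega
        have hHzero : ∫ h : ↥H, fchar n ↑h ∂ν = 0 := by
          obtain ⟨h0, hh0, hne⟩ := hex n hn
          refine integral_char ν _ (fun a b => by
            simp [fchar_apply, map_add, AddCircle.toCircle_add]) ⟨h0, hh0⟩ ?_
          rw [fchar_apply]
          intro hcontra
          apply hne
          apply e_injective
          simpa [AddCircle.toCircle_zero] using hcontra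
        rw [hSdef]
        simp only [Set.mem_setOf_eq]
        rw [hGzero, hHzero]
    -- the span of characters lies in S
    have hMS : ∀ f : C(Gd d, ℂ),
        f ∈ Submodule.span ℂ (Set.range (fchar (d := d))) → f ∈ S := by
      intro f hf
      induction hf using Submodule.span_induction with
      | mem f hf => obtain ⟨n, rfl⟩ := hf; exact hcharS n
      | zero => simp [hSdef]
      | add f g hf hg h1 h2 =>
        rw [hSdef] at h1 h2 ⊢
        simp only [Set.mem_setOf_eq, ContinuousMap.add_apply] at h1 h2 ⊢
        rw [integral_add (intH f) (intH g), integral_add (intG f) (intG g), h1, h2]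
      | smul c f hf h1 =>
        rw [hSdef] at h1 ⊢
        simp only [Set.mem_setOf_eq, ContinuousMap.smul_apply] at h1 ⊢
        rw [integral_smul, integral_smul, h1]
    -- the star subalgebra generated by characters (its carrier is the span)
    have hone : (1 : C(Gd d, ℂ)) ∈ Submodule.span ℂ (Set.range (fchar (d := d))) := by
      rw [← fchar_zero]
      exact Submodule.subset_span ⟨0, rfl⟩
    let A : StarSubalgebra ℂ C(Gd d, ℂ) :=
      { carrier := Submodule.span ℂ (Set.range (fchar (d := d)))
        add_mem' := fun ha hb => Submodule.add_mem _ ha hb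
        zero_mem' := Submodule.zero_mem _
        one_mem' := hone
        mul_mem' := by
          intro f g hf hg
          induction hf, hg using Submodule.span_induction₂ with
          | mem_mem f g hf hg =>
            obtain ⟨n, rfl⟩ := hf; obtain ⟨m, rfl⟩ := hg
            rw [fchar_mul]
            exact Submodule.subset_span ⟨n + m, rfl⟩
          | zero_left g hg => rw [zero_mul]; exact Submodule.zero_mem _
          | zero_right f hf => rw [mul_zero]; exact Submodule.zero_mem _
          | add_left f g k hf hg hk h1 h2 =>
            rw [add_mul]; exact Submodule.add_mem _ h1 h2
          | add_right f g k hf hg hk h1 h2 =>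
            rw [mul_add]; exact Submodule.add_mem _ h1 h2
          | smul_left c f g hf hg h1 =>
            rw [smul_mul_assoc]; exact Submodule.smul_mem _ c h1
          | smul_right c f g hf hg h1 =>
            rw [mul_smul_comm]; exact Submodule.smul_mem _ c h1
        algebraMap_mem' := fun c => by
          rw [Algebra.algebraMap_eq_smul_one]
          exact Submodule.smul_mem _ c hone
        star_mem' := by
          intro f hf
          induction hf using Submodule.span_induction with
          | mem f hf =>
            obtain ⟨n, rfl⟩ := hf
            rw [fchar_star]
            exact Submodule.subset_span ⟨-n, rfl⟩
          | zero => rw [star_zero]; exact Submodule.zero_mem _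
          | add f g hf hg h1 h2 => rw [star_add]; exact Submodule.add_mem _ h1 h2
          | smul c f hf h1 =>
            rw [star_smul]
            exact Submodule.smul_mem _ _ h1 }
    -- characters separate points
    have hsep : A.SeparatesPoints := by
      intro x y hxy
      obtain ⟨i, hi⟩ : ∃ i, x i ≠ y i := Function.ne_iff.mp hxy
      refine ⟨_, ⟨fchar (Pi.single i 1), Submodule.subset_span ⟨_, rfl⟩, rfl⟩, ?_⟩
      simp only [fchar_apply, chi_single]
      intro hcontra
      exact hi (e_injective hcontra)
    -- Stone-Weierstrass: the span is dense
    have htop := ContinuousMap.starSubalgebra_topologicalClosure_eq_top_of_separatesPoints A hsep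
    have hdense : closure (A : Set C(Gd d, ℂ)) = Set.univ := by
      have h := congrArg (fun B : StarSubalgebra ℂ C(Gd d, ℂ) => (B : Set C(Gd d, ℂ))) htop
      simpa using h
    -- hence S is everything
    have hS : ∀ f : C(Gd d, ℂ), f ∈ S := by
      intro f
      have hmem : f ∈ closure (A : Set C(Gd d, ℂ)) := by rw [hdense]; exact Set.mem_univ f
      have hsub : (A : Set C(Gd d, ℂ)) ⊆ S := fun g hg => hMS g hg
      exact (hSclosed.closure_subset_iff.mpr hsub) hmem
    -- Urysohn function separating H from a point outside
    obtain ⟨x₀, hx₀⟩ : ∃ x, x ∉ H := by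
      by_contra h
      push_neg at h
      exact hproper ((AddSubgroup.eq_top_iff' H).mpr h)
    obtain ⟨g, hg0, hg1, hg01⟩ :=
      exists_continuous_zero_one_of_isClosed hclosed isClosed_singleton
        (Set.disjoint_singleton_right.mpr hx₀)
    let f : C(Gd d, ℂ) := ⟨fun x => ((g x : ℝ) : ℂ), Complex.continuous_ofReal.comp g.continuous⟩
    have h0 : ∫ h : ↥H, f ↑h ∂ν = 0 := by
      have hfz : ∀ h : ↥H, f ↑h = 0 := fun h => by
        have : g ↑h = 0 := hg0 h.2
        simp [f, this]
      simp [hfz]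
    have hGf : ∫ x, f x ∂μ = ((∫ x, g x ∂μ : ℝ) : ℂ) := integral_ofReal
    have hg_int : Integrable (⇑g) μ :=
      g.continuous.integrable_of_hasCompactSupport (HasCompactSupport.of_compactSpace _)
    have hpos : 0 < ∫ x, g x ∂μ := by
      set U : Set (Gd d) := ⇑g ⁻¹' Set.Ioi (1/2 : ℝ) with hUdef
      have hUopen : IsOpen U := isOpen_Ioi.preimage g.continuous
      have hx₀U : x₀ ∈ U := by
        have : g x₀ = 1 := hg1 rfl
        simp [hUdef, this]
        norm_num
      have hμU : 0 < μ U := hUopen.measure_pos μ ⟨x₀, hx₀U⟩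
      have hμUtop : μ U ≠ ⊤ := measure_ne_top μ U
      calc (0:ℝ) < (1/2) * (μ U).toReal := by
            have : 0 < (μ U).toReal := ENNReal.toReal_pos hμU.ne' hμUtop
            linarith
        _ ≤ ∫ x in U, g x ∂μ :=
            setIntegral_ge_of_const_le_real hUopen.measurableSet hμUtop
              (fun x hx => le_of_lt hx) hg_int.integrableOn
        _ ≤ ∫ x, g x ∂μ :=
            setIntegral_le_integral hg_int
              (Filter.Eventually.of_forall fun x => (hg01 x).1)
    have hfS := hS f
    rw [hSdef] at hfS
    simp only [Set.mem_setOf_eq] at hfS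
    rw [h0] at hfS
    rw [hGf] at hfS
    have : ∫ x, g x ∂μ = 0 := by exact_mod_cast hfS.symm
    rw [this] at hpos
    exact lt_irrefl 0 hpos
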